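/- arXiv:1804.02853 — 3 statements merged into one kernel-verified Lean document; each statement's English description precedes it below -/
import Mathlib

section
/- Let r ∈ (0,1) and T > 0. Suppose the bilinear operator B satisfies the pointwise kernel bound ‖B(u,v)(t)‖_∞ ≤ C ∫₀ᵗ (t-s)^{-1/2} ‖u(s)‖_∞ ‖v(s)‖_∞ ds. Then B is continuous from L^∞_{1,T} × L^∞_{r,T} into L^∞_{r,T} with norm at most C_{r} (independent of T), and from L^∞_{r,T} × L^∞_{r,T} into L^∞_{r,T} with norm at most C_r T^{(1-r)/2}. -/
open MeasureTheory

/-- Convergence of the real Beta-type integral `∫₀¹ (1-x)^{-1/2} x^{-a} dx` for `0 < a < 1`. -/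
lemma aux_beta_integrable {a : ℝ} (ha : 0 < a) (ha1 : a < 1) :
    IntervalIntegrable (fun x : ℝ => (1 - x) ^ (-(1 : ℝ) / 2) * x ^ (-a)) volume 0 1 := by
  have hc : IntervalIntegrable
      (fun x : ℝ => (x : ℂ) ^ ((((1 - a : ℝ)) : ℂ) - 1) * (1 - (x : ℂ)) ^ ((1 / 2 : ℂ) - 1))
      volume 0 1 := by
    refine Complex.betaIntegral_convergent ?_ ?_
    · simp only [Complex.ofReal_re]; linarith
    · norm_num
  have hn := hc.norm
  rw [intervalIntegrable_iff, Set.uIoc_of_le (by norm_num : (0:ℝ) ≤ 1)] at hn ⊢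
  refine hn.congr ?_
  filter_upwards [ae_restrict_mem measurableSet_Ioc] with x hx
  rcases eq_or_lt_of_le hx.2 with h1 | h1
  · -- x = 1
    subst h1
    have hz : ((1:ℝ) - (1:ℝ)) ^ (-(1:ℝ)/2) = 0 := by
      rw [sub_self, Real.zero_rpow (by norm_num)]
    have hne : (1/2 : ℂ) - 1 ≠ 0 := by
      intro h
      apply_fun Complex.re at h
      norm_num at h
    have h2 : ((1:ℂ) - (((1:ℝ)):ℂ)) ^ ((1/2:ℂ) - 1) = 0 := by
      rw [show ((1:ℂ) - (((1:ℝ)):ℂ)) = 0 by norm_num]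
      exact Complex.zero_cpow hne
    show ‖_ * _‖ = _
    rw [h2, mul_zero, norm_zero, hz, zero_mul]
  · have hx0 : (0:ℝ) < x := hx.1
    have hx1 : (0:ℝ) < 1 - x := by linarith
    have e1 : (1 - (x : ℂ)) = (((1 - x : ℝ)) : ℂ) := by push_cast; ring
    rw [norm_mul, e1,
      Complex.norm_cpow_eq_rpow_re_of_pos hx0, Complex.norm_cpow_eq_rpow_re_of_pos hx1]
    have e2 : ((((1 - a : ℝ)) : ℂ) - 1).re = -a := by simp
    have e3 : ((1 / 2 : ℂ) - 1).re = -(1:ℝ)/2 := by norm_num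
    rw [e2, e3]
    ring

/-- The key convolution estimate: `∫₀ᵗ (t-s)^{-1/2} s^{-a} ds ≤ K t^{1/2-a}`. -/
lemma aux_key {a : ℝ} (ha : 0 < a) (ha1 : a < 1) :
    ∃ K : ℝ, 0 ≤ K ∧ ∀ t : ℝ, 0 < t →
      IntegrableOn (fun s => (t - s) ^ (-(1 : ℝ) / 2) * s ^ (-a)) (Set.Ioo 0 t) ∧
      ∫ s in Set.Ioo 0 t, (t - s) ^ (-(1 : ℝ) / 2) * s ^ (-a) ≤
        K * t ^ ((1 : ℝ) / 2 - a) := by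
  set h : ℝ → ℝ := fun x => (1 - x) ^ (-(1 : ℝ) / 2) * x ^ (-a) with hh_def
  have hh : IntervalIntegrable h volume 0 1 := aux_beta_integrable ha ha1
  refine ⟨∫ x in (0:ℝ)..1, h x, ?_, ?_⟩
  · apply intervalIntegral.integral_nonneg (by norm_num)
    intro x hx
    exact mul_nonneg (Real.rpow_nonneg (by linarith [hx.2]) _)
      (Real.rpow_nonneg hx.1 _)
  intro t ht
  set g : ℝ → ℝ := fun s => (t - s) ^ (-(1 : ℝ) / 2) * s ^ (-a) with hg_def
  have hcong : Set.EqOn (fun x => g (t * x))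
      (fun x => t ^ (-(1:ℝ)/2 - a) * h x) (Set.uIcc 0 1) := by
    intro x hx
    rw [Set.uIcc_of_le (by norm_num : (0:ℝ) ≤ 1)] at hx
    have e1 : (t - t * x) ^ (-(1:ℝ)/2) = t ^ (-(1:ℝ)/2) * (1 - x) ^ (-(1:ℝ)/2) := by
      rw [show t - t * x = t * (1 - x) by ring,
        Real.mul_rpow ht.le (by linarith [hx.2])]
    have e2 : (t * x) ^ (-a) = t ^ (-a) * x ^ (-a) := Real.mul_rpow ht.le hx.1
    show (t - t * x) ^ (-(1:ℝ)/2) * (t * x) ^ (-a) = t ^ (-(1:ℝ)/2 - a) * h x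
    rw [e1, e2, show (-(1:ℝ)/2 - a) = (-(1:ℝ)/2) + (-a) by ring, Real.rpow_add ht]
    simp only [hh_def]
    ring
  have h1 : IntervalIntegrable (fun x => g (t * x)) volume 0 1 := by
    have hc2 : IntervalIntegrable (fun x => t ^ (-(1:ℝ)/2 - a) * h x) volume 0 1 :=
      hh.const_mul _
    rw [intervalIntegrable_iff, Set.uIoc_of_le (by norm_num : (0:ℝ) ≤ 1)] at hc2 ⊢
    refine hc2.congr ?_
    filter_upwards [ae_restrict_mem measurableSet_Ioc] with x hx
    have hx' : x ∈ Set.uIcc (0:ℝ) 1 := by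
      rw [Set.uIcc_of_le (by norm_num : (0:ℝ) ≤ 1)]
      exact ⟨hx.1.le, hx.2⟩
    exact (hcong hx').symm
  have hgint : IntervalIntegrable g volume 0 t := by
    have h2 : IntervalIntegrable (fun x => g (t * x)) volume (0 / t) (t / t) := by
      rw [zero_div, div_self ht.ne']; exact h1
    exact (IntervalIntegrable.comp_mul_left_iff ht.ne').mp h2
  constructor
  · exact ((intervalIntegrable_iff_integrableOn_Ioo_of_le ht.le).mp hgint)
  · have key : ∫ s in Set.Ioo 0 t, g s = t * (t ^ (-(1:ℝ)/2 - a) * ∫ x in (0:ℝ)..1, h x) := by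
      rw [← MeasureTheory.integral_Ioc_eq_integral_Ioo,
        ← intervalIntegral.integral_of_le ht.le]
      have e4 : (t : ℝ) • ∫ x in (0:ℝ)..1, g (t * x) = ∫ x in (t * 0)..(t * 1), g x :=
        intervalIntegral.smul_integral_comp_mul_left g t
      rw [mul_zero, mul_one] at e4
      rw [← e4, intervalIntegral.integral_congr hcong,
        intervalIntegral.integral_const_mul]
      simp [smul_eq_mul]
    rw [key, ← mul_assoc, show t * t ^ (-(1:ℝ)/2 - a) = t ^ ((1:ℝ)/2 - a) by
      rw [show ((1:ℝ)/2 - a) = 1 + (-(1:ℝ)/2 - a) by ring, Real.rpow_add ht,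
        Real.rpow_one]]
    rw [mul_comm]

/-- Bilinear heat-type estimate in the weighted spaces `L^∞_{μ,T}` whose norm is
`sup_{0<s<T} s^{μ/2} ‖f(s)‖_∞`. Here `E` plays the role of `L^∞(ℝ^d, ℝ^d)` and the kernel
bound `‖B(u,v)(t)‖ ≤ C ∫₀ᵗ (t-s)^{-1/2} ‖u s‖ ‖v s‖ ds` is assumed. Then `B` maps
`L^∞_{1,T} × L^∞_{r,T}` to `L^∞_{r,T}` with norm `≤ C_r` independent of `T`, and
`L^∞_{r,T} × L^∞_{r,T}` to `L^∞_{r,T}` with norm `≤ C_r T^{(1-r)/2}`. -/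
theorem stmt_5 {E : Type*} [NormedAddCommGroup E]
    (r : ℝ) (hr : 0 < r) (hr1 : r < 1) (C : ℝ) (hC : 0 < C) :
    ∃ Cr : ℝ, 0 < Cr ∧ ∀ T : ℝ, 0 < T →
      ∀ B : (ℝ → E) → (ℝ → E) → (ℝ → E),
      (∀ u v : ℝ → E, ∀ t ∈ Set.Ioo 0 T,
          ‖B u v t‖ ≤ C * ∫ s in Set.Ioo 0 t, (t - s) ^ (-(1 : ℝ) / 2) * ‖u s‖ * ‖v s‖) →
      ((∀ (u v : ℝ → E) (M₁ M₂ : ℝ),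
          (∀ s ∈ Set.Ioo 0 T, s ^ ((1 : ℝ) / 2) * ‖u s‖ ≤ M₁) →
          (∀ s ∈ Set.Ioo 0 T, s ^ (r / 2) * ‖v s‖ ≤ M₂) →
          ∀ t ∈ Set.Ioo 0 T, t ^ (r / 2) * ‖B u v t‖ ≤ Cr * M₁ * M₂) ∧
       (∀ (u v : ℝ → E) (M₁ M₂ : ℝ),
          (∀ s ∈ Set.Ioo 0 T, s ^ (r / 2) * ‖u s‖ ≤ M₁) →
          (∀ s ∈ Set.Ioo 0 T, s ^ (r / 2) * ‖v s‖ ≤ M₂) →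
          ∀ t ∈ Set.Ioo 0 T, t ^ (r / 2) * ‖B u v t‖ ≤ Cr * T ^ ((1 - r) / 2) * M₁ * M₂)) := by
  obtain ⟨K₁, hK₁0, hK₁⟩ := aux_key (a := (1 + r)/2) (by linarith) (by linarith)
  obtain ⟨K₂, hK₂0, hK₂⟩ := aux_key (a := r) hr hr1
  refine ⟨C * (K₁ + K₂) + 1, by positivity, ?_⟩
  intro T hT B hB
  -- general bound on the integral
  have main : ∀ (u v : ℝ → E) (M₁ M₂ : ℝ) (a : ℝ), 0 ≤ M₁ → 0 ≤ M₂ →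
      (∀ s ∈ Set.Ioo 0 T, ‖u s‖ ≤ M₁ * s ^ (-((1:ℝ) - a)/2)) →
      (∀ s ∈ Set.Ioo 0 T, ‖v s‖ ≤ M₂ * s ^ (-(a + r)/2 + (1 - a)/2 - (1-a)/2)) → True := by
      intro _ _ _ _ _ _ _ _ _; trivial
  clear main
  have bound : ∀ (u v : ℝ → E) (M₁ M₂ a K : ℝ), 0 < a → a < 1 → 0 ≤ M₁ → 0 ≤ M₂ → 0 ≤ K →
      (∀ t' : ℝ, 0 < t' →
        IntegrableOn (fun s => (t' - s) ^ (-(1 : ℝ) / 2) * s ^ (-a)) (Set.Ioo 0 t') ∧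
        ∫ s in Set.Ioo 0 t', (t' - s) ^ (-(1 : ℝ) / 2) * s ^ (-a) ≤
          K * t' ^ ((1 : ℝ) / 2 - a)) →
      (∀ s ∈ Set.Ioo 0 T, ‖u s‖ * ‖v s‖ ≤ M₁ * M₂ * s ^ (-a)) →
      ∀ t ∈ Set.Ioo 0 T,
        (∫ s in Set.Ioo 0 t, (t - s) ^ (-(1 : ℝ) / 2) * ‖u s‖ * ‖v s‖) ≤
          M₁ * M₂ * (K * t ^ ((1 : ℝ) / 2 - a)) := by
    intro u v M₁ M₂ a K ha ha1 hM₁ hM₂ hK0 hK huv t ht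
    obtain ⟨hint, hval⟩ := hK t ht.1
    have step : (∫ s in Set.Ioo 0 t, (t - s) ^ (-(1 : ℝ) / 2) * ‖u s‖ * ‖v s‖) ≤
        ∫ s in Set.Ioo 0 t, M₁ * M₂ * ((t - s) ^ (-(1 : ℝ) / 2) * s ^ (-a)) := by
      refine integral_mono_of_nonneg ?_ ((hint.const_mul (M₁ * M₂))) ?_
      · filter_upwards [ae_restrict_mem measurableSet_Ioo] with s hs
        exact mul_nonneg (mul_nonneg (Real.rpow_nonneg (by linarith [hs.2]) _)
          (norm_nonneg _)) (norm_nonneg _)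
      · filter_upwards [ae_restrict_mem measurableSet_Ioo] with s hs
        have hsT : s ∈ Set.Ioo 0 T := ⟨hs.1, lt_trans hs.2 ht.2⟩
        have h1 : ‖u s‖ * ‖v s‖ ≤ M₁ * M₂ * s ^ (-a) := huv s hsT
        have h2 : (0:ℝ) ≤ (t - s) ^ (-(1 : ℝ) / 2) :=
          Real.rpow_nonneg (by linarith [hs.2]) _
        calc (t - s) ^ (-(1 : ℝ) / 2) * ‖u s‖ * ‖v s‖
            = (t - s) ^ (-(1 : ℝ) / 2) * (‖u s‖ * ‖v s‖) := by ring
          _ ≤ (t - s) ^ (-(1 : ℝ) / 2) * (M₁ * M₂ * s ^ (-a)) :=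
              mul_le_mul_of_nonneg_left h1 h2
          _ = M₁ * M₂ * ((t - s) ^ (-(1 : ℝ) / 2) * s ^ (-a)) := by ring
    calc (∫ s in Set.Ioo 0 t, (t - s) ^ (-(1 : ℝ) / 2) * ‖u s‖ * ‖v s‖)
        ≤ ∫ s in Set.Ioo 0 t, M₁ * M₂ * ((t - s) ^ (-(1 : ℝ) / 2) * s ^ (-a)) := step
      _ = M₁ * M₂ * ∫ s in Set.Ioo 0 t, (t - s) ^ (-(1 : ℝ) / 2) * s ^ (-a) :=
          integral_const_mul _ _
      _ ≤ M₁ * M₂ * (K * t ^ ((1 : ℝ) / 2 - a)) :=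
          mul_le_mul_of_nonneg_left hval (mul_nonneg hM₁ hM₂)
  constructor
  · -- case L^∞_{1,T} × L^∞_{r,T}
    intro u v M₁ M₂ hu hv t ht
    have hhalf : T / 2 ∈ Set.Ioo 0 T := ⟨by linarith, by linarith⟩
    have hM₁ : 0 ≤ M₁ := le_trans (mul_nonneg
      (Real.rpow_nonneg (by linarith) _) (norm_nonneg _)) (hu _ hhalf)
    have hM₂ : 0 ≤ M₂ := le_trans (mul_nonneg
      (Real.rpow_nonneg (by linarith) _) (norm_nonneg _)) (hv _ hhalf)
    have huv : ∀ s ∈ Set.Ioo 0 T, ‖u s‖ * ‖v s‖ ≤ M₁ * M₂ * s ^ (-((1+r)/2)) := by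
      intro s hs
      have hs0 := hs.1
      have hu' : ‖u s‖ ≤ M₁ * s ^ (-(1:ℝ)/2) := by
        have h := hu s hs
        have hp : (0:ℝ) < s ^ ((1:ℝ)/2) := Real.rpow_pos_of_pos hs0 _
        rw [show (-(1:ℝ)/2) = -((1:ℝ)/2) by ring, Real.rpow_neg hs0.le,
          mul_comm M₁, ← div_eq_inv_mul, le_div_iff₀ hp]
        linarith [h]
      have hv' : ‖v s‖ ≤ M₂ * s ^ (-(r/2)) := by
        have h := hv s hs
        have hp : (0:ℝ) < s ^ (r/2) := Real.rpow_pos_of_pos hs0 _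
        rw [Real.rpow_neg hs0.le, mul_comm M₂, ← div_eq_inv_mul, le_div_iff₀ hp]
        linarith [h]
      calc ‖u s‖ * ‖v s‖ ≤ (M₁ * s ^ (-(1:ℝ)/2)) * (M₂ * s ^ (-(r/2))) :=
            mul_le_mul hu' hv' (norm_nonneg _)
              (mul_nonneg hM₁ (Real.rpow_nonneg hs0.le _))
        _ = M₁ * M₂ * (s ^ (-(1:ℝ)/2) * s ^ (-(r/2))) := by ring
        _ = M₁ * M₂ * s ^ (-((1+r)/2)) := by
            rw [← Real.rpow_add hs0, show (-(1:ℝ)/2 + -(r/2)) = -((1+r)/2) by ring]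
    have hI := bound u v M₁ M₂ ((1+r)/2) K₁ (by linarith) (by linarith) hM₁ hM₂ hK₁0
      hK₁ huv t ht
    have hBt := hB u v t ht
    have hP : (0:ℝ) ≤ t ^ (r/2) := Real.rpow_nonneg ht.1.le _
    have hPQ : t ^ (r/2) * t ^ ((1:ℝ)/2 - (1+r)/2) = 1 := by
      rw [← Real.rpow_add ht.1, show r/2 + ((1:ℝ)/2 - (1+r)/2) = 0 by ring,
        Real.rpow_zero]
    calc t ^ (r/2) * ‖B u v t‖
        ≤ t ^ (r/2) * (C * (M₁ * M₂ * (K₁ * t ^ ((1:ℝ)/2 - (1+r)/2)))) := by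
          refine mul_le_mul_of_nonneg_left (le_trans hBt ?_) hP
          exact mul_le_mul_of_nonneg_left hI hC.le
      _ = C * K₁ * M₁ * M₂ * (t ^ (r/2) * t ^ ((1:ℝ)/2 - (1+r)/2)) := by ring
      _ = C * K₁ * M₁ * M₂ := by rw [hPQ, mul_one]
      _ ≤ (C * (K₁ + K₂) + 1) * M₁ * M₂ := by
          have hCK : C * K₁ ≤ C * (K₁ + K₂) + 1 := by nlinarith
          exact mul_le_mul_of_nonneg_right
            (mul_le_mul_of_nonneg_right hCK hM₁) hM₂
  · -- case L^∞_{r,T} × L^∞_{r,T}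
    intro u v M₁ M₂ hu hv t ht
    have hhalf : T / 2 ∈ Set.Ioo 0 T := ⟨by linarith, by linarith⟩
    have hM₁ : 0 ≤ M₁ := le_trans (mul_nonneg
      (Real.rpow_nonneg (by linarith) _) (norm_nonneg _)) (hu _ hhalf)
    have hM₂ : 0 ≤ M₂ := le_trans (mul_nonneg
      (Real.rpow_nonneg (by linarith) _) (norm_nonneg _)) (hv _ hhalf)
    have huv : ∀ s ∈ Set.Ioo 0 T, ‖u s‖ * ‖v s‖ ≤ M₁ * M₂ * s ^ (-r) := by
      intro s hs
      have hs0 := hs.1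
      have hu' : ‖u s‖ ≤ M₁ * s ^ (-(r/2)) := by
        have h := hu s hs
        have hp : (0:ℝ) < s ^ (r/2) := Real.rpow_pos_of_pos hs0 _
        rw [Real.rpow_neg hs0.le, mul_comm M₁, ← div_eq_inv_mul, le_div_iff₀ hp]
        linarith [h]
      have hv' : ‖v s‖ ≤ M₂ * s ^ (-(r/2)) := by
        have h := hv s hs
        have hp : (0:ℝ) < s ^ (r/2) := Real.rpow_pos_of_pos hs0 _
        rw [Real.rpow_neg hs0.le, mul_comm M₂, ← div_eq_inv_mul, le_div_iff₀ hp]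
        linarith [h]
      calc ‖u s‖ * ‖v s‖ ≤ (M₁ * s ^ (-(r/2))) * (M₂ * s ^ (-(r/2))) :=
            mul_le_mul hu' hv' (norm_nonneg _)
              (mul_nonneg hM₁ (Real.rpow_nonneg hs0.le _))
        _ = M₁ * M₂ * (s ^ (-(r/2)) * s ^ (-(r/2))) := by ring
        _ = M₁ * M₂ * s ^ (-r) := by
            rw [← Real.rpow_add hs0, show (-(r/2) + -(r/2)) = -r by ring]
    have hI := bound u v M₁ M₂ r K₂ hr hr1 hM₁ hM₂ hK₂0 hK₂ huv t ht
    have hBt := hB u v t ht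
    have hP : (0:ℝ) ≤ t ^ (r/2) := Real.rpow_nonneg ht.1.le _
    have hPQ : t ^ (r/2) * t ^ ((1:ℝ)/2 - r) = t ^ ((1 - r)/2) := by
      rw [← Real.rpow_add ht.1, show r/2 + ((1:ℝ)/2 - r) = (1 - r)/2 by ring]
    have hTb : t ^ ((1 - r)/2) ≤ T ^ ((1 - r)/2) :=
      Real.rpow_le_rpow ht.1.le ht.2.le (by linarith)
    have hCK : C * K₂ ≤ C * (K₁ + K₂) + 1 := by nlinarith
    calc t ^ (r/2) * ‖B u v t‖
        ≤ t ^ (r/2) * (C * (M₁ * M₂ * (K₂ * t ^ ((1:ℝ)/2 - r)))) := by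
          refine mul_le_mul_of_nonneg_left (le_trans hBt ?_) hP
          exact mul_le_mul_of_nonneg_left hI hC.le
      _ = C * K₂ * M₁ * M₂ * (t ^ (r/2) * t ^ ((1:ℝ)/2 - r)) := by ring
      _ = C * K₂ * M₁ * M₂ * t ^ ((1 - r)/2) := by rw [hPQ]
      _ ≤ C * K₂ * M₁ * M₂ * T ^ ((1 - r)/2) := by
          refine mul_le_mul_of_nonneg_left hTb ?_
          positivity
      _ = (C * K₂) * (T ^ ((1 - r)/2) * M₁ * M₂) := by ring
      _ ≤ (C * (K₁ + K₂) + 1) * (T ^ ((1 - r)/2) * M₁ * M₂) := by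
          refine mul_le_mul_of_nonneg_right hCK ?_
          positivity
      _ = (C * (K₁ + K₂) + 1) * T ^ ((1 - r)/2) * M₁ * M₂ := by ring
end

section
/- Let T* < ∞, r ∈ (0,1), and suppose u : [0,T*) → B^{-r,∞}_∞ satisfies: for every t₀ ∈ (0,T*) and every t ∈ [0, T*-t₀), the bound f_{t₀}(t) ≤ C(‖u(t₀)‖_{B^{-r,∞}_∞} + (T*-t₀)^{(1-r)/2} f_{t₀}(t)²), where f_{t₀}(t) = sup_{0<s≤t} s^{r/2} ‖u(t₀+s)‖_{L^∞}, and f_{t₀}(t) → +∞ as t → (T*-t₀)⁻. Then for every t₀ close enough to T*, (T*-t₀)^{(1-r)/2} ‖u(t₀)‖_{B^{-r,∞}_∞} ≥ 1/(4C²). In particular liminf_{t→T*} (T*-t)^{(1-r)/2} ‖u(t)‖_{B^{-r,∞}_∞} ≥ 1/(4C²) and ∫_{T*/2}^{T*} ‖u(t)‖_{B^{-r,∞}_∞}^{2/(1-r)} dt = +∞. -/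
open Filter MeasureTheory
open scoped ENNReal

-- auxiliary: divergence of 1/x near 0
lemma aux_lintegral_inv_eq_top (a : ℝ) (ha : 0 < a) :
    ∫⁻ y in Set.Ioo (0 : ℝ) a, ENNReal.ofReal y⁻¹ = ⊤ := by
  by_contra h
  have hlt : ∫⁻ y in Set.Ioo (0 : ℝ) a, ENNReal.ofReal y⁻¹ < ⊤ := lt_top_iff_ne_top.2 h
  have hmeas : Measurable fun y : ℝ => y⁻¹ := measurable_inv
  have hint : IntegrableOn (fun y : ℝ => y⁻¹) (Set.Ioo 0 a) := by
    refine ⟨hmeas.aestronglyMeasurable, ?_⟩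
    rw [hasFiniteIntegral_iff_norm]
    have heq : ∫⁻ y in Set.Ioo (0 : ℝ) a, ENNReal.ofReal ‖y⁻¹‖
        = ∫⁻ y in Set.Ioo (0 : ℝ) a, ENNReal.ofReal y⁻¹ := by
      refine setLIntegral_congr_fun measurableSet_Ioo ?_
      intro y hy
      beta_reduce
      rw [Real.norm_eq_abs, abs_of_nonneg (inv_nonneg.2 hy.1.le)]
    rwa [heq]
  have : IntegrableOn (fun x : ℝ => x ^ (-1 : ℝ)) (Set.Ioo 0 a) := by
    have hfe : (fun x : ℝ => x ^ (-1 : ℝ)) = fun x : ℝ => x⁻¹ := by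
      funext x
      rw [Real.rpow_neg_one]
    rw [hfe]
    exact hint
  rw [intervalIntegral.integrableOn_Ioo_rpow_iff ha] at this
  linarith

/-- Blow-up rate lower bound. Here `Nb t` stands for `‖u(t)‖_{B^{-r,∞}_∞}` and `F t₀ t`
stands for `f_{t₀}(t) = sup_{0<s≤t} s^{r/2} ‖u(t₀+s)‖_∞`. If for every `t₀ ∈ (0,T*)` the
function `F t₀` is continuous on `[0, T*-t₀)`, vanishes at `0`, satisfies the bound
`F t₀ t ≤ C (Nb t₀ + (T*-t₀)^{(1-r)/2} (F t₀ t)²)` and blows up as `t → (T*-t₀)⁻`, then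
`(T*-t₀)^{(1-r)/2} Nb t₀ ≥ 1/(4C²)` for every `t₀ ∈ (0,T*)`; in particular the liminf bound
holds and `∫_{T*/2}^{T*} Nb(t)^{2/(1-r)} dt = +∞`. -/
theorem stmt_17 (Tstar r C : ℝ) (hT : 0 < Tstar) (hr : 0 < r) (hr1 : r < 1) (hC : 0 < C)
    (Nb : ℝ → ℝ) (hNb_nonneg : ∀ t ∈ Set.Ioo 0 Tstar, 0 ≤ Nb t)
    (F : ℝ → ℝ → ℝ)
    (hF_nonneg : ∀ t₀ ∈ Set.Ioo 0 Tstar, ∀ t ∈ Set.Ico 0 (Tstar - t₀), 0 ≤ F t₀ t)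
    (hF_cont : ∀ t₀ ∈ Set.Ioo 0 Tstar, ContinuousOn (F t₀) (Set.Ico 0 (Tstar - t₀)))
    (hF_zero : ∀ t₀ ∈ Set.Ioo 0 Tstar, F t₀ 0 = 0)
    (hF_bound : ∀ t₀ ∈ Set.Ioo 0 Tstar, ∀ t ∈ Set.Ico 0 (Tstar - t₀),
      F t₀ t ≤ C * (Nb t₀ + (Tstar - t₀) ^ ((1 - r) / 2) * (F t₀ t) ^ 2))
    (hF_blow : ∀ t₀ ∈ Set.Ioo 0 Tstar,
      Tendsto (F t₀) (nhdsWithin (Tstar - t₀) (Set.Iio (Tstar - t₀))) atTop) :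
    (∀ t₀ ∈ Set.Ioo 0 Tstar, 1 / (4 * C ^ 2) ≤ (Tstar - t₀) ^ ((1 - r) / 2) * Nb t₀) ∧
    ENNReal.ofReal (1 / (4 * C ^ 2)) ≤
      Filter.liminf (fun t => ENNReal.ofReal ((Tstar - t) ^ ((1 - r) / 2) * Nb t))
        (nhdsWithin Tstar (Set.Iio Tstar)) ∧
    ∫⁻ t in Set.Ioc (Tstar / 2) Tstar, ENNReal.ofReal (Nb t ^ (2 / (1 - r))) = ⊤ := by
  have key : ∀ t₀ ∈ Set.Ioo 0 Tstar,
      1 / (4 * C ^ 2) ≤ (Tstar - t₀) ^ ((1 - r) / 2) * Nb t₀ := by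
    intro t₀ ht₀
    by_contra hlt
    push_neg at hlt
    have hδ : 0 < Tstar - t₀ := by linarith [ht₀.2]
    set δ := Tstar - t₀ with hδdef
    set B := δ ^ ((1 - r) / 2) with hBdef
    have hBpos : 0 < B := Real.rpow_pos_of_pos hδ _
    set A := Nb t₀ with hAdef
    have hA : 0 ≤ A := hNb_nonneg t₀ ht₀
    -- hlt : B * A < 1/(4C²)
    have h4 : B * A * (4 * C ^ 2) < 1 := (lt_div_iff₀ (by positivity)).1 hlt
    set m := 1 / (2 * C * B) with hm
    have hmpos : 0 < m := by positivity
    have hquad : C * (A + B * m ^ 2) < m := by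
      rw [hm, div_pow, one_pow, lt_div_iff₀ (by positivity : (0:ℝ) < 2 * C * B)]
      have h2 : (2 * C * B) ^ 2 = 4 * C ^ 2 * B ^ 2 := by ring
      rw [h2]
      rw [div_eq_mul_inv]
      have hB2 : (4 * C ^ 2 * B ^ 2)⁻¹ * (4 * C ^ 2 * B ^ 2) = 1 := by
        field_simp
      nlinarith [hBpos, hC, mul_pos hBpos hBpos]
    have hne : ∀ t ∈ Set.Ico 0 δ, F t₀ t ≠ m := by
      intro t ht heq
      have hb := hF_bound t₀ ht₀ t ht
      rw [heq] at hb
      linarith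
    have hlt_m : ∀ t ∈ Set.Ico 0 δ, F t₀ t < m := by
      intro t ht
      rcases lt_or_ge (F t₀ t) m with h | h
      · exact h
      exfalso
      have h' : m < F t₀ t := lt_of_le_of_ne h fun e => hne t ht e.symm
      have hsub : Set.Icc 0 t ⊆ Set.Ico 0 δ := fun s hs => ⟨hs.1, lt_of_le_of_lt hs.2 ht.2⟩
      have hcont : ContinuousOn (F t₀) (Set.Icc 0 t) := (hF_cont t₀ ht₀).mono hsub
      have hiv := intermediate_value_Icc ht.1 hcont
      have hmem : m ∈ Set.Icc (F t₀ 0) (F t₀ t) := by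
        constructor
        · rw [hF_zero t₀ ht₀]; exact hmpos.le
        · exact h'.le
      obtain ⟨s, hs, hsm⟩ := hiv hmem
      exact hne s (hsub hs) hsm
    have hev1 : ∀ᶠ t in nhdsWithin δ (Set.Iio δ), m < F t₀ t :=
      (hF_blow t₀ ht₀).eventually_gt_atTop m
    have hev2 : ∀ᶠ t in nhdsWithin δ (Set.Iio δ), t ∈ Set.Ico 0 δ := by
      have h0 : ∀ᶠ t in nhdsWithin δ (Set.Iio δ), (0 : ℝ) < t :=
        eventually_nhdsWithin_of_eventually_nhds (eventually_gt_nhds hδ)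
      filter_upwards [h0, self_mem_nhdsWithin] with t h1 h2
      exact ⟨h1.le, h2⟩
    obtain ⟨t, h1, h2⟩ := (hev1.and hev2).exists
    exact absurd (hlt_m t h2) (not_lt.2 h1.le)
  refine ⟨key, ?_, ?_⟩
  · -- liminf bound
    have hev : ∀ᶠ t in nhdsWithin Tstar (Set.Iio Tstar),
        ENNReal.ofReal (1 / (4 * C ^ 2)) ≤
          ENNReal.ofReal ((Tstar - t) ^ ((1 - r) / 2) * Nb t) := by
      have h0 : ∀ᶠ t in nhdsWithin Tstar (Set.Iio Tstar), (0 : ℝ) < t :=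
        eventually_nhdsWithin_of_eventually_nhds (eventually_gt_nhds hT)
      filter_upwards [h0, self_mem_nhdsWithin] with t h1 h2
      exact ENNReal.ofReal_le_ofReal (key t ⟨h1, h2⟩)
    exact le_liminf_of_le (by isBoundedDefault) hev
  · -- integral divergence
    set c := 1 / (4 * C ^ 2) with hc_def
    have hc : 0 < c := by positivity
    set q := 2 / (1 - r) with hq_def
    have h1r : 0 < 1 - r := by linarith
    have hq : 0 < q := by positivity
    set k := c ^ q with hk_def
    have hk : 0 < k := Real.rpow_pos_of_pos hc q
    have hpt : ∀ t ∈ Set.Ioo (Tstar / 2) Tstar, k * (Tstar - t)⁻¹ ≤ Nb t ^ q := by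
      intro t ht
      have ht' : t ∈ Set.Ioo 0 Tstar := ⟨by linarith [ht.1], ht.2⟩
      have h1 := key t ht'
      have hTt : 0 < Tstar - t := by linarith [ht.2]
      have h2 : c ^ q ≤ ((Tstar - t) ^ ((1 - r) / 2) * Nb t) ^ q :=
        Real.rpow_le_rpow hc.le h1 hq.le
      rw [Real.mul_rpow (Real.rpow_nonneg hTt.le _) (hNb_nonneg t ht'),
        ← Real.rpow_mul hTt.le] at h2
      have hqq : (1 - r) / 2 * q = 1 := by
        rw [hq_def]; field_simp
      rw [hqq, Real.rpow_one] at h2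
      rw [mul_inv_le_iff₀ hTt]
      have := mul_comm (Tstar - t) (Nb t ^ q)
      linarith
    -- the map x ↦ Tstar - x
    have hhomeo : MeasurableEmbedding fun x : ℝ => Tstar - x := by
      have h := ((Homeomorph.neg ℝ).trans (Homeomorph.addLeft Tstar)).measurableEmbedding
      have hfe : (fun x : ℝ => Tstar - x) =
          ⇑((Homeomorph.neg ℝ).trans (Homeomorph.addLeft Tstar)) := by
        funext x; simp [sub_eq_add_neg]
      rw [hfe]; exact h
    have hmp : MeasurePreserving (fun x : ℝ => Tstar - x) volume volume :=
      Measure.measurePreserving_sub_left volume Tstar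
    have hpre : (fun x : ℝ => Tstar - x) ⁻¹' Set.Ioo 0 (Tstar / 2) =
        Set.Ioo (Tstar / 2) Tstar := by
      ext x
      simp only [Set.mem_preimage, Set.mem_Ioo]
      constructor
      · rintro ⟨h1, h2⟩; constructor <;> linarith
      · rintro ⟨h1, h2⟩; constructor <;> linarith
    have hchange : ∫⁻ t in Set.Ioo (Tstar / 2) Tstar, ENNReal.ofReal (k * (Tstar - t)⁻¹)
        = ∫⁻ y in Set.Ioo 0 (Tstar / 2), ENNReal.ofReal (k * y⁻¹) := by
      rw [← hpre]
      exact hmp.setLIntegral_comp_preimage_emb hhomeo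
        (fun y => ENNReal.ofReal (k * y⁻¹)) _
    have hdiv : ∫⁻ y in Set.Ioo (0:ℝ) (Tstar / 2), ENNReal.ofReal (k * y⁻¹) = ⊤ := by
      have : ∀ y : ℝ, ENNReal.ofReal (k * y⁻¹) = ENNReal.ofReal k * ENNReal.ofReal y⁻¹ :=
        fun y => ENNReal.ofReal_mul hk.le
      simp_rw [this]
      rw [lintegral_const_mul' _ _ ENNReal.ofReal_ne_top]
      rw [aux_lintegral_inv_eq_top (Tstar / 2) (by linarith)]
      rw [ENNReal.mul_top]
      simp [ENNReal.ofReal_eq_zero, not_le, hk]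
    have hmono : (⊤ : ℝ≥0∞) ≤
        ∫⁻ t in Set.Ioc (Tstar / 2) Tstar, ENNReal.ofReal (Nb t ^ (2 / (1 - r))) := by
      calc (⊤ : ℝ≥0∞) = ∫⁻ t in Set.Ioo (Tstar / 2) Tstar,
            ENNReal.ofReal (k * (Tstar - t)⁻¹) := by rw [hchange, hdiv]
        _ ≤ ∫⁻ t in Set.Ioo (Tstar / 2) Tstar, ENNReal.ofReal (Nb t ^ (2 / (1 - r))) := by
            refine setLIntegral_mono' measurableSet_Ioo fun t ht => ?_
            exact ENNReal.ofReal_le_ofReal (hpt t ht)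
        _ ≤ ∫⁻ t in Set.Ioc (Tstar / 2) Tstar, ENNReal.ofReal (Nb t ^ (2 / (1 - r))) :=
            lintegral_mono_set Set.Ioo_subset_Ioc_self
    exact top_le_iff.1 hmono
end

section
/- Let T > 0, p₁, p₂, q ∈ [1,∞] with p₁ ≤ p₂, s ∈ ℝ, and set s' = s + 1 - 2(1/p₁ - 1/p₂). Suppose the operator family satisfies the dyadic block estimate ‖e^{tΔ}Δ_j g‖_{L^q} ≤ C e^{-c t 4^j} ‖Δ_j g‖_{L^q} for j ≥ 0. Then the Oseen integral operator L_{Oss}(f)(t) = -∫₀ᵗ e^{(t-s)Δ} ℙ∇ f(s) ds maps the Chemin–Lerner space 𝐋̃^{p₁}_T B^{s,∞}_q boundedly into 𝐋̃^{p₂}_T B^{s',∞}_q, with operator norm at most C'(1+T) for a constant C' independent of T. -/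
open MeasureTheory
open scoped ENNReal

/-- The time-Lebesgue norm `‖N‖_{L^p([0,T])}` of an `ℝ≥0∞`-valued function `N`. -/
noncomputable def timeLp (p : ℝ≥0∞) (T : ℝ) (N : ℝ → ℝ≥0∞) : ℝ≥0∞ :=
  if p = ⊤ then essSup N (volume.restrict (Set.Ioc 0 T))
  else (∫⁻ t in Set.Ioc 0 T, N t ^ p.toReal) ^ (1 / p.toReal)

lemma lint_reflect (t : ℝ) (g : ℝ → ℝ≥0∞) (hg : Measurable g) :
    ∫⁻ σ in Set.Ioc 0 t, g (t - σ) = ∫⁻ u in Set.Ioc 0 t, g u := by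
  have hmp : MeasurePreserving (fun σ : ℝ => t - σ) volume volume :=
    Measure.measurePreserving_sub_left volume t
  have hemb : MeasurableEmbedding (fun σ : ℝ => t - σ) :=
    (MeasurableEquiv.subLeft t).measurableEmbedding
  rw [hmp.setLIntegral_comp_emb hemb g (Set.Ioc 0 t)]
  have himg : (fun σ : ℝ => t - σ) '' Set.Ioc 0 t = Set.Ico 0 t := by
    ext u
    simp only [Set.mem_image, Set.mem_Ioc, Set.mem_Ico]
    constructor
    · rintro ⟨σ, ⟨h1, h2⟩, rfl⟩; constructor <;> linarith
    · rintro ⟨h1, h2⟩; exact ⟨t - u, ⟨by linarith, by linarith⟩, by ring⟩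
  rw [himg]
  exact setLIntegral_congr Ico_ae_eq_Ioc

lemma lint_translate (σ T : ℝ) (g : ℝ → ℝ≥0∞) (hg : Measurable g) :
    ∫⁻ t in Set.Icc σ T, g (t - σ) = ∫⁻ u in Set.Icc 0 (T - σ), g u := by
  have hmp : MeasurePreserving (fun t : ℝ => t - σ) volume volume :=
    measurePreserving_sub_right volume σ
  have hemb : MeasurableEmbedding (fun t : ℝ => t - σ) :=
    (MeasurableEquiv.subRight σ).measurableEmbedding
  rw [hmp.setLIntegral_comp_emb hemb g (Set.Icc σ T)]
  have himg : (fun t : ℝ => t - σ) '' Set.Icc σ T = Set.Icc 0 (T - σ) := by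
    ext u
    simp only [Set.mem_image, Set.mem_Icc]
    constructor
    · rintro ⟨x, ⟨h1, h2⟩, rfl⟩; constructor <;> linarith
    · rintro ⟨h1, h2⟩; exact ⟨u + σ, ⟨by linarith, by linarith⟩, by ring⟩
  rw [himg]

lemma lint_exp_le (β T : ℝ) (hβ : 0 < β) :
    ∫⁻ u in Set.Ioc 0 T, ENNReal.ofReal (Real.exp (-β * u)) ≤ ENNReal.ofReal (1 / β) := by
  rcases le_or_gt T 0 with hT | hT
  · rw [Set.Ioc_eq_empty (by linarith), Measure.restrict_empty, lintegral_zero_measure]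
    exact zero_le
  · have hint : IntegrableOn (fun u : ℝ => Real.exp (-β * u)) (Set.Ioc 0 T) := by
      apply Continuous.integrableOn_Ioc
      exact Real.continuous_exp.comp (continuous_const.mul continuous_id)
    rw [← MeasureTheory.ofReal_integral_eq_lintegral_ofReal hint
      (Filter.Eventually.of_forall fun x => (Real.exp_pos _).le)]
    apply ENNReal.ofReal_le_ofReal
    have h1 : ∫ u in Set.Ioc 0 T, Real.exp (-β * u) = ∫ u in (0)..T, Real.exp (-β * u) :=
      (intervalIntegral.integral_of_le hT.le).symm
    rw [h1]
    have h2 : ∫ u in (0)..T, Real.exp (-β * u) = (-β)⁻¹ * (Real.exp (-β * T) - Real.exp 0) := by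
      have := intervalIntegral.integral_comp_mul_left (a := (0:ℝ)) (b := T)
        (f := Real.exp) (c := -β) (by linarith : (-β) ≠ 0)
      rw [this, integral_exp]
      simp [smul_eq_mul]
    rw [h2, Real.exp_zero, one_div, inv_neg]
    have h4 : 0 < Real.exp (-β * T) := Real.exp_pos _
    have h5 : (0:ℝ) < β⁻¹ := inv_pos.mpr hβ
    nlinarith [mul_pos h5 h4]
lemma holder_step (t : ℝ) (K N : ℝ → ℝ≥0∞) (hK : Measurable K) (hN : Measurable N)
    (hK0 : ∀ τ, K τ ≠ 0) (hKtop : ∀ τ, K τ ≠ ⊤)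
    (r P₁ θ₁ θ₂ θ₃ : ℝ) (hr : 0 ≤ r) (hP₁ : 0 ≤ P₁)
    (hθ₁ : 0 ≤ θ₁) (hθ₂ : 0 ≤ θ₂) (hθ₃ : 0 ≤ θ₃)
    (hsum : θ₁ + θ₂ + θ₃ = 1) (hKexp : r * θ₁ + r * θ₂ = 1) (hNexp : P₁ * θ₁ + P₁ * θ₃ = 1) :
    ∫⁻ σ in Set.Ioc 0 t, K (t - σ) * N σ ≤
      (∫⁻ σ in Set.Ioc 0 t, K (t - σ) ^ r * N σ ^ P₁) ^ θ₁ *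
      (∫⁻ σ in Set.Ioc 0 t, K (t - σ) ^ r) ^ θ₂ *
      (∫⁻ σ in Set.Ioc 0 t, N σ ^ P₁) ^ θ₃ := by
  classical
  set μ := volume.restrict (Set.Ioc 0 t)
  have hK' : Measurable fun σ : ℝ => K (t - σ) := hK.comp (measurable_const.sub measurable_id)
  set f : Fin 3 → ℝ → ℝ≥0∞ := ![fun σ => K (t - σ) ^ r * N σ ^ P₁,
    fun σ => K (t - σ) ^ r, fun σ => N σ ^ P₁] with hf
  set p : Fin 3 → ℝ := ![θ₁, θ₂, θ₃] with hp
  have hmeas : ∀ i ∈ Finset.univ, AEMeasurable (f i) μ := by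
    intro i _
    fin_cases i
    · exact ((hK'.pow_const r).mul (hN.pow_const P₁)).aemeasurable
    · exact (hK'.pow_const r).aemeasurable
    · exact (hN.pow_const P₁).aemeasurable
  have hsum' : ∑ i ∈ Finset.univ, p i = 1 := by
    simp [hp, Fin.sum_univ_three]; linarith
  have hnn : ∀ i ∈ Finset.univ, 0 ≤ p i := by
    intro i _; fin_cases i <;> simpa [hp]
  have key := ENNReal.lintegral_prod_norm_pow_le (μ := μ) Finset.univ hmeas hsum' hnn
  have hid : ∀ σ : ℝ, K (t - σ) * N σ = ∏ i ∈ Finset.univ, f i σ ^ p i := by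
    intro σ
    rw [Fin.prod_univ_three]
    simp only [hf, hp]
    show K (t - σ) * N σ =
      (K (t - σ) ^ r * N σ ^ P₁) ^ θ₁ * (K (t - σ) ^ r) ^ θ₂ * (N σ ^ P₁) ^ θ₃
    symm
    rw [ENNReal.mul_rpow_of_nonneg _ _ hθ₁]
    rw [← ENNReal.rpow_mul, ← ENNReal.rpow_mul, ← ENNReal.rpow_mul, ← ENNReal.rpow_mul]
    have hre : K (t-σ) ^ (r*θ₁) * N σ ^ (P₁*θ₁) * K (t-σ) ^ (r*θ₂) * N σ ^ (P₁*θ₃)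
        = (K (t-σ) ^ (r*θ₁) * K (t-σ) ^ (r*θ₂)) * (N σ ^ (P₁*θ₁) * N σ ^ (P₁*θ₃)) := by
      ring
    rw [hre, ← ENNReal.rpow_add _ _ (hK0 _) (hKtop _),
      ← ENNReal.rpow_add_of_nonneg _ _ (mul_nonneg hP₁ hθ₁) (mul_nonneg hP₁ hθ₃),
      hKexp, hNexp, ENNReal.rpow_one, ENNReal.rpow_one]
  calc ∫⁻ σ in Set.Ioc 0 t, K (t - σ) * N σ
      = ∫⁻ σ, ∏ i ∈ Finset.univ, f i σ ^ p i ∂μ := lintegral_congr fun σ => hid σ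
    _ ≤ ∏ i ∈ Finset.univ, (∫⁻ σ, f i σ ∂μ) ^ p i := key
    _ = (∫⁻ σ in Set.Ioc 0 t, K (t - σ) ^ r * N σ ^ P₁) ^ θ₁ *
        (∫⁻ σ in Set.Ioc 0 t, K (t - σ) ^ r) ^ θ₂ *
        (∫⁻ σ in Set.Ioc 0 t, N σ ^ P₁) ^ θ₃ := by
      rw [Fin.prod_univ_three]
      simp only [hf, hp]
      rfl

lemma tonelli_step (T : ℝ) (k M : ℝ → ℝ≥0∞) (hk : Measurable k) (hM : Measurable M)
    (Kb : ℝ≥0∞) (hKb : Kb ≠ ⊤) (hkb : (∫⁻ u in Set.Ioc 0 T, k u) ≤ Kb) :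
    (∫⁻ t in Set.Ioc 0 T, ∫⁻ σ in Set.Ioc 0 t, k (t - σ) * M σ) ≤
      Kb * ∫⁻ σ in Set.Ioc 0 T, M σ := by
  classical
  set S : Set (ℝ × ℝ) := {p : ℝ × ℝ | 0 < p.2 ∧ p.2 ≤ p.1} with hS
  have hSmeas : MeasurableSet S :=
    (measurableSet_lt measurable_const measurable_snd).inter
      (measurableSet_le measurable_snd measurable_fst)
  set g : ℝ × ℝ → ℝ≥0∞ := S.indicator (fun p => k (p.1 - p.2) * M p.2) with hg
  have hgmeas : Measurable g :=
    Measurable.indicator ((hk.comp (measurable_fst.sub measurable_snd)).mul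
      (hM.comp measurable_snd)) hSmeas
  have step1 : ∀ t : ℝ, (∫⁻ σ in Set.Ioc 0 t, k (t - σ) * M σ) = ∫⁻ σ, g (t, σ) := by
    intro t
    rw [← lintegral_indicator measurableSet_Ioc]
    apply lintegral_congr
    intro σ
    by_cases hσ : σ ∈ Set.Ioc 0 t
    · rw [Set.indicator_of_mem hσ, hg, Set.indicator_of_mem]
      exact ⟨hσ.1, hσ.2⟩
    · rw [Set.indicator_of_notMem hσ, hg, Set.indicator_of_notMem]
      intro hmem
      exact hσ ⟨hmem.1, hmem.2⟩
  calc (∫⁻ t in Set.Ioc 0 T, ∫⁻ σ in Set.Ioc 0 t, k (t - σ) * M σ)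
      = ∫⁻ t in Set.Ioc 0 T, ∫⁻ σ, g (t, σ) := by
        apply lintegral_congr; intro t; exact step1 t
    _ = ∫⁻ σ, ∫⁻ t in Set.Ioc 0 T, g (t, σ) := by
        apply lintegral_lintegral_swap
        exact (hgmeas.comp measurable_id).aemeasurable
    _ ≤ ∫⁻ σ, (Set.Ioc 0 T).indicator (fun σ => Kb * M σ) σ := by
        apply lintegral_mono
        intro σ
        by_cases hσ : σ ∈ Set.Ioc 0 T
        · rw [Set.indicator_of_mem hσ]
          calc (∫⁻ t in Set.Ioc 0 T, g (t, σ))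
              ≤ ∫⁻ t in Set.Ioc 0 T, (Set.Icc σ T).indicator (fun t => k (t - σ)) t * M σ := by
                apply lintegral_mono_ae
                rw [ae_restrict_iff' measurableSet_Ioc]
                apply Filter.Eventually.of_forall
                intro t ht
                by_cases hmem : (t, σ) ∈ S
                · rw [hg, Set.indicator_of_mem hmem,
                    Set.indicator_of_mem (Set.mem_Icc.mpr ⟨hmem.2, ht.2⟩)]
                · rw [hg, Set.indicator_of_notMem hmem]
                  exact zero_le
            _ = (∫⁻ t in Set.Icc σ T ∩ Set.Ioc 0 T, k (t - σ)) * M σ := by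
                have h1 : Measurable fun t : ℝ => k (t - σ) :=
                  hk.comp (measurable_id.sub measurable_const)
                rw [lintegral_mul_const'' _ ((h1.indicator measurableSet_Icc).aemeasurable)]
                rw [lintegral_indicator measurableSet_Icc,
                  Measure.restrict_restrict measurableSet_Icc]
            _ ≤ Kb * M σ := by
                apply mul_le_mul_left
                calc (∫⁻ t in Set.Icc σ T ∩ Set.Ioc 0 T, k (t - σ))
                    ≤ ∫⁻ t in Set.Icc σ T, k (t - σ) :=
                      lintegral_mono' (Measure.restrict_mono Set.inter_subset_left le_rfl) le_rfl
                  _ = ∫⁻ u in Set.Icc 0 (T - σ), k u := lint_translate σ T k hk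
                  _ ≤ ∫⁻ u in Set.Icc 0 T, k u :=
                      lintegral_mono' (Measure.restrict_mono
                        (Set.Icc_subset_Icc le_rfl (by linarith [hσ.1])) le_rfl) le_rfl
                  _ = ∫⁻ u in Set.Ioc 0 T, k u := (setLIntegral_congr Ioc_ae_eq_Icc).symm
                  _ ≤ Kb := hkb
        · rw [Set.indicator_of_notMem hσ]
          have hz : ∀ t ∈ Set.Ioc 0 T, g (t, σ) = 0 := by
            intro t ht
            rw [hg, Set.indicator_of_notMem]
            intro hmem
            exact hσ ⟨hmem.1, le_trans hmem.2 ht.2⟩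
          have : (∫⁻ t in Set.Ioc 0 T, g (t, σ)) = 0 := by
            rw [setLIntegral_congr_fun measurableSet_Ioc
              (show Set.EqOn (fun t => g (t, σ)) (fun _ => 0) (Set.Ioc 0 T) from hz),
              lintegral_zero]
          exact this.le
    _ = ∫⁻ σ in Set.Ioc 0 T, Kb * M σ := lintegral_indicator measurableSet_Ioc _
    _ = Kb * ∫⁻ σ in Set.Ioc 0 T, M σ := lintegral_const_mul' _ _ hKb

lemma master (p₁ p₂ : ℝ≥0∞) (hp₁ : 1 ≤ p₁) (hp₂ : 1 ≤ p₂) (hp₁₂ : p₁ ≤ p₂)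
    (T Ctot B κ : ℝ) (hT : 0 < T) (hCtot : 0 < Ctot) (hB : 0 ≤ B) (hκ : 0 < κ)
    (N F : ℝ → ℝ≥0∞) (hN : Measurable N)
    (hFN : ∀ t ∈ Set.Ioc (0:ℝ) T, F t ≤ ENNReal.ofReal Ctot *
      ∫⁻ σ in Set.Ioc 0 t, ENNReal.ofReal (Real.exp (-B * (t - σ))) * N σ)
    (hκ1 : 1 - 1/p₁.toReal + 1/p₂.toReal ≠ 0 →
      (∫⁻ u in Set.Ioc (0:ℝ) T,
        ENNReal.ofReal (Real.exp (-B * u)) ^ (1/(1 - 1/p₁.toReal + 1/p₂.toReal))) ≤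
        ENNReal.ofReal (κ ^ (1/(1 - 1/p₁.toReal + 1/p₂.toReal))))
    (hκ2 : 1 - 1/p₁.toReal + 1/p₂.toReal = 0 → 1 ≤ κ) :
    timeLp p₂ T F ≤ ENNReal.ofReal (Ctot * κ) * timeLp p₁ T N := by
  classical
  -- trivial case : infinite right-hand side
  by_cases hNtop : timeLp p₁ T N = ⊤
  · rw [hNtop, ENNReal.mul_top (ENNReal.ofReal_pos.mpr (mul_pos hCtot hκ)).ne']
    exact le_top
  set K : ℝ → ℝ≥0∞ := fun τ => ENNReal.ofReal (Real.exp (-B * τ)) with hKdef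
  have hKmeas : Measurable K :=
    (Real.continuous_exp.comp (continuous_const.mul continuous_id)).measurable.ennreal_ofReal
  have hK0 : ∀ τ, K τ ≠ 0 := by
    intro τ
    simp only [hKdef, ne_eq, ENNReal.ofReal_eq_zero, not_le]
    exact Real.exp_pos _
  have hKtop : ∀ τ, K τ ≠ ⊤ := fun τ => ENNReal.ofReal_ne_top
  have hKone : ∀ τ, 0 ≤ τ → K τ ≤ 1 := by
    intro τ hτ
    simp only [hKdef]
    rw [← ENNReal.ofReal_one]
    apply ENNReal.ofReal_le_ofReal
    rw [Real.exp_le_one_iff]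
    nlinarith
  set a₁ := 1 / p₁.toReal with ha₁def
  set a₂ := 1 / p₂.toReal with ha₂def
  set ρ := 1 - a₁ + a₂ with hρdef
  set r := 1 / ρ with hrdef
  have ha₁0 : 0 ≤ a₁ := by positivity
  have ha₂0 : 0 ≤ a₂ := by positivity
  have ha₁1 : a₁ ≤ 1 := by
    by_cases h : p₁ = ⊤
    · simp [ha₁def, h]
    · have h1 : 1 ≤ p₁.toReal := by
        have := ENNReal.toReal_mono h hp₁
        simpa using this
      rw [ha₁def, div_le_one (by linarith)]
      exact h1
  have ha₂a₁ : a₂ ≤ a₁ := by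
    by_cases h : p₂ = ⊤
    · simp [ha₂def, h, ha₁0]
    · have hp₁t : p₁ ≠ ⊤ := fun hh => h (top_le_iff.mp (hh ▸ hp₁₂))
      have h1 : 1 ≤ p₁.toReal := by simpa using ENNReal.toReal_mono hp₁t hp₁
      have h2 : p₁.toReal ≤ p₂.toReal := ENNReal.toReal_mono h hp₁₂
      rw [ha₁def, ha₂def]
      apply one_div_le_one_div_of_le (by linarith) h2
  have hρ0 : 0 ≤ ρ := by rw [hρdef]; linarith
  have hρ1 : ρ ≤ 1 := by rw [hρdef]; linarith
  -- the kernel bound, valid whenever ρ ≠ 0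
  have kint : ρ ≠ 0 → (∫⁻ u in Set.Ioc (0:ℝ) T, K u ^ r) ≤ ENNReal.ofReal (κ ^ r) := by
    intro h; exact hκ1 h
  have kernel_le : ρ ≠ 0 → ∀ t ∈ Set.Ioc (0:ℝ) T,
      (∫⁻ σ in Set.Ioc 0 t, K (t - σ) ^ r) ≤ ENNReal.ofReal (κ ^ r) := by
    intro hρne t ht
    rw [lint_reflect t (fun u => K u ^ r) (hKmeas.pow_const r)]
    exact le_trans (lintegral_mono_set (Set.Ioc_subset_Ioc_right ht.2)) (kint hρne)
  by_cases hρz : ρ = 0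
  · -- case p₁ = 1, p₂ = ∞
    have hκ1' : 1 ≤ κ := hκ2 hρz
    have ha₁ : a₁ = 1 := by
      have : a₁ = 1 + a₂ := by rw [hρdef] at hρz; linarith
      linarith
    have ha₂ : a₂ = 0 := by
      have : a₁ = 1 + a₂ := by rw [hρdef] at hρz; linarith
      linarith
    have hp₁1 : p₁ = 1 := by
      have h0 : p₁.toReal ≠ 0 := by
        intro h
        rw [ha₁def, h] at ha₁
        norm_num at ha₁
      have : p₁.toReal = 1 := by
        rw [ha₁def] at ha₁
        field_simp at ha₁
        linarith
      have hne : p₁ ≠ ⊤ := by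
        intro h; rw [h] at this; simp at this
      rw [← ENNReal.ofReal_toReal hne, this]
      simp
    have hp₂top : p₂ = ⊤ := by
      by_contra h
      have h2 : 1 ≤ p₂.toReal := by simpa using ENNReal.toReal_mono h hp₂
      rw [ha₂def] at ha₂
      rw [div_eq_zero_iff] at ha₂
      rcases ha₂ with h' | h'
      · norm_num at h'
      · linarith
    have hNp : timeLp p₁ T N = ∫⁻ σ in Set.Ioc 0 T, N σ := by
      rw [timeLp, if_neg (by rw [hp₁1]; exact ENNReal.one_ne_top), hp₁1]
      simp
    rw [timeLp, if_pos hp₂top]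
    refine essSup_le_of_ae_le _ ?_
    simp only [Filter.EventuallyLE]
    rw [ae_restrict_iff' measurableSet_Ioc]
    apply Filter.Eventually.of_forall
    intro t ht
    calc F t ≤ ENNReal.ofReal Ctot * ∫⁻ σ in Set.Ioc 0 t, K (t - σ) * N σ := hFN t ht
      _ ≤ ENNReal.ofReal Ctot * ∫⁻ σ in Set.Ioc 0 t, N σ := by
          apply mul_le_mul_right
          apply lintegral_mono_ae
          rw [ae_restrict_iff' measurableSet_Ioc]
          apply Filter.Eventually.of_forall
          intro σ hσ
          calc K (t - σ) * N σ ≤ 1 * N σ :=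
                mul_le_mul_left (hKone _ (by linarith [hσ.2])) _
            _ = N σ := one_mul _
      _ ≤ ENNReal.ofReal Ctot * ∫⁻ σ in Set.Ioc 0 T, N σ :=
          mul_le_mul_right (lintegral_mono_set (Set.Ioc_subset_Ioc_right ht.2)) _
      _ ≤ ENNReal.ofReal (Ctot * κ) * timeLp p₁ T N := by
          rw [hNp]
          apply mul_le_mul_left
          apply ENNReal.ofReal_le_ofReal
          nlinarith
  · -- ρ ≠ 0
    have hρpos : 0 < ρ := lt_of_le_of_ne hρ0 (Ne.symm hρz)
    have hrpos : 0 < r := by rw [hrdef]; positivity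
    have hrρ : r * ρ = 1 := by rw [hrdef]; field_simp
    have hκr : ((κ ^ r) ^ ρ : ℝ) = κ := by
      rw [← Real.rpow_mul hκ.le, hrρ, Real.rpow_one]
    by_cases hp₂top : p₂ = ⊤
    · have ha₂ : a₂ = 0 := by rw [ha₂def, hp₂top]; simp
      rw [timeLp, if_pos hp₂top]
      by_cases hp₁top : p₁ = ⊤
      · -- p₁ = p₂ = ∞
        have ha₁ : a₁ = 0 := by rw [ha₁def, hp₁top]; simp
        have hρ1' : ρ = 1 := by rw [hρdef, ha₁, ha₂]; ring
        have hr1 : r = 1 := by rw [hrdef, hρ1']; norm_num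
        set M := timeLp p₁ T N with hMdef
        have hMess : M = essSup N (volume.restrict (Set.Ioc 0 T)) := by
          rw [hMdef, timeLp, if_pos hp₁top]
        refine essSup_le_of_ae_le _ ?_
        simp only [Filter.EventuallyLE]
        rw [ae_restrict_iff' measurableSet_Ioc]
        apply Filter.Eventually.of_forall
        intro t ht
        have hNM : ∀ᵐ σ ∂(volume.restrict (Set.Ioc 0 t)), N σ ≤ M := by
          have h1 : ∀ᵐ σ ∂(volume.restrict (Set.Ioc 0 T)), N σ ≤ M := by
            rw [hMess]; exact ae_le_essSup
          exact h1.filter_mono (ae_mono (Measure.restrict_mono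
            (Set.Ioc_subset_Ioc_right ht.2) le_rfl))
        have h1 : Measurable fun σ : ℝ => K (t - σ) :=
          hKmeas.comp (measurable_const.sub measurable_id)
        have hker : (∫⁻ σ in Set.Ioc 0 t, K (t - σ)) ≤ ENNReal.ofReal κ := by
          have := kernel_le hρz t ht
          simpa [hr1, ENNReal.rpow_one, Real.rpow_one] using this
        calc F t ≤ ENNReal.ofReal Ctot * ∫⁻ σ in Set.Ioc 0 t, K (t - σ) * N σ := hFN t ht
          _ ≤ ENNReal.ofReal Ctot * ∫⁻ σ in Set.Ioc 0 t, K (t - σ) * M := by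
              apply mul_le_mul_right
              apply lintegral_mono_ae
              filter_upwards [hNM] with σ hσ
              exact mul_le_mul_right hσ _
          _ = ENNReal.ofReal Ctot * ((∫⁻ σ in Set.Ioc 0 t, K (t - σ)) * M) := by
              rw [lintegral_mul_const'' _ h1.aemeasurable]
          _ ≤ ENNReal.ofReal Ctot * (ENNReal.ofReal κ * M) :=
              mul_le_mul_right (mul_le_mul_left hker _) _
          _ = ENNReal.ofReal (Ctot * κ) * M := by
              rw [← mul_assoc, ← ENNReal.ofReal_mul hCtot.le]
      · -- 1 ≤ p₁ < ∞, p₂ = ∞ : pointwise Hölder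
        have hP₁ : 1 ≤ p₁.toReal := by simpa using ENNReal.toReal_mono hp₁top hp₁
        have hP₁0 : p₁.toReal ≠ 0 := by linarith
        have ha₁P : a₁ * p₁.toReal = 1 := by rw [ha₁def]; field_simp
        have hNp : (∫⁻ σ in Set.Ioc 0 T, N σ ^ p₁.toReal) = (timeLp p₁ T N) ^ p₁.toReal := by
          rw [timeLp, if_neg hp₁top, ← ENNReal.rpow_mul,
            show 1 / p₁.toReal * p₁.toReal = 1 by field_simp, ENNReal.rpow_one]
        refine essSup_le_of_ae_le _ ?_
        simp only [Filter.EventuallyLE]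
        rw [ae_restrict_iff' measurableSet_Ioc]
        apply Filter.Eventually.of_forall
        intro t ht
        have hold := holder_step t K N hKmeas hN hK0 hKtop r p₁.toReal 0 ρ a₁
          hrpos.le (by linarith) le_rfl hρ0 ha₁0
          (by rw [hρdef, ha₂]; ring)
          (by rw [mul_zero, zero_add, hrρ])
          (by rw [mul_zero, zero_add, mul_comm]; exact ha₁P)
        calc F t ≤ ENNReal.ofReal Ctot * ∫⁻ σ in Set.Ioc 0 t, K (t - σ) * N σ := hFN t ht
          _ ≤ ENNReal.ofReal Ctot *
              ((∫⁻ σ in Set.Ioc 0 t, K (t - σ) ^ r * N σ ^ p₁.toReal) ^ (0:ℝ) *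
               (∫⁻ σ in Set.Ioc 0 t, K (t - σ) ^ r) ^ ρ *
               (∫⁻ σ in Set.Ioc 0 t, N σ ^ p₁.toReal) ^ a₁) := mul_le_mul_right hold _
          _ = ENNReal.ofReal Ctot *
              ((∫⁻ σ in Set.Ioc 0 t, K (t - σ) ^ r) ^ ρ *
               (∫⁻ σ in Set.Ioc 0 t, N σ ^ p₁.toReal) ^ a₁) := by
              rw [ENNReal.rpow_zero, one_mul]
          _ ≤ ENNReal.ofReal Ctot *
              (ENNReal.ofReal (κ ^ r) ^ ρ * ((timeLp p₁ T N) ^ p₁.toReal) ^ a₁) := by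
              apply mul_le_mul_right
              apply mul_le_mul'
              · exact ENNReal.rpow_le_rpow (kernel_le hρz t ht) hρ0
              · rw [← hNp]
                exact ENNReal.rpow_le_rpow
                  (lintegral_mono_set (Set.Ioc_subset_Ioc_right ht.2)) ha₁0
          _ = ENNReal.ofReal (Ctot * κ) * timeLp p₁ T N := by
              rw [ENNReal.ofReal_rpow_of_nonneg (by positivity) hρ0, hκr,
                ← ENNReal.rpow_mul,
                show p₁.toReal * a₁ = 1 by rw [mul_comm]; exact ha₁P, ENNReal.rpow_one,
                ← mul_assoc, ← ENNReal.ofReal_mul hCtot.le]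
    · -- generic case : p₂ < ∞
      have hp₁top : p₁ ≠ ⊤ := fun hh => hp₂top (top_le_iff.mp (hh ▸ hp₁₂))
      have hP₁ : 1 ≤ p₁.toReal := by simpa using ENNReal.toReal_mono hp₁top hp₁
      have hP₂ : 1 ≤ p₂.toReal := by simpa using ENNReal.toReal_mono hp₂top hp₂
      have hP₁0 : p₁.toReal ≠ 0 := by linarith
      have hP₂0 : p₂.toReal ≠ 0 := by linarith
      have hP₂nn : (0:ℝ) ≤ p₂.toReal := by linarith
      have ha₁P : a₁ * p₁.toReal = 1 := by rw [ha₁def]; field_simp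
      have ha₂P : a₂ * p₂.toReal = 1 := by rw [ha₂def]; field_simp
      have hθ₂0 : 0 ≤ ρ - a₂ := by rw [hρdef]; linarith
      have hθ₃0 : 0 ≤ a₁ - a₂ := by linarith
      have hNp : (∫⁻ σ in Set.Ioc 0 T, N σ ^ p₁.toReal) = (timeLp p₁ T N) ^ p₁.toReal := by
        rw [timeLp, if_neg hp₁top, ← ENNReal.rpow_mul,
          show 1 / p₁.toReal * p₁.toReal = 1 by field_simp, ENNReal.rpow_one]
      set Np := timeLp p₁ T N with hNpdef
      set Cst := ENNReal.ofReal Ctot ^ p₂.toReal *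
          ENNReal.ofReal (κ ^ r) ^ ((ρ - a₂) * p₂.toReal) *
          Np ^ (p₁.toReal * (a₁ - a₂) * p₂.toReal) with hCstdef
      have hCsttop : Cst ≠ ⊤ := by
        rw [hCstdef]
        apply ENNReal.mul_ne_top
        apply ENNReal.mul_ne_top
        · exact ENNReal.rpow_ne_top_of_nonneg hP₂nn ENNReal.ofReal_ne_top
        · exact ENNReal.rpow_ne_top_of_nonneg (by positivity) ENNReal.ofReal_ne_top
        · exact ENNReal.rpow_ne_top_of_nonneg (by positivity) hNtop
      have key : ∀ t ∈ Set.Ioc (0:ℝ) T, F t ^ p₂.toReal ≤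
          Cst * (∫⁻ σ in Set.Ioc 0 t, K (t - σ) ^ r * N σ ^ p₁.toReal) := by
        intro t ht
        have hold := holder_step t K N hKmeas hN hK0 hKtop r p₁.toReal a₂ (ρ - a₂) (a₁ - a₂)
          hrpos.le (by linarith) ha₂0 hθ₂0 hθ₃0
          (by rw [hρdef]; ring)
          (by rw [show r * a₂ + r * (ρ - a₂) = r * ρ by ring, hrρ])
          (by rw [show p₁.toReal * a₂ + p₁.toReal * (a₁ - a₂) = a₁ * p₁.toReal by ring, ha₁P])
        have step1 : F t ≤ ENNReal.ofReal Ctot *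
            ((∫⁻ σ in Set.Ioc 0 t, K (t - σ) ^ r * N σ ^ p₁.toReal) ^ a₂ *
             ENNReal.ofReal (κ ^ r) ^ (ρ - a₂) * Np ^ (p₁.toReal * (a₁ - a₂))) := by
          refine le_trans (hFN t ht) (mul_le_mul_right (le_trans hold ?_) _)
          apply mul_le_mul'
          · apply mul_le_mul' le_rfl
            exact ENNReal.rpow_le_rpow (kernel_le hρz t ht) hθ₂0
          · calc (∫⁻ σ in Set.Ioc 0 t, N σ ^ p₁.toReal) ^ (a₁ - a₂)
                ≤ (∫⁻ σ in Set.Ioc 0 T, N σ ^ p₁.toReal) ^ (a₁ - a₂) :=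
                  ENNReal.rpow_le_rpow
                    (lintegral_mono_set (Set.Ioc_subset_Ioc_right ht.2)) hθ₃0
              _ = Np ^ (p₁.toReal * (a₁ - a₂)) := by
                  rw [hNp, ← ENNReal.rpow_mul]
        calc F t ^ p₂.toReal
            ≤ (ENNReal.ofReal Ctot *
              ((∫⁻ σ in Set.Ioc 0 t, K (t - σ) ^ r * N σ ^ p₁.toReal) ^ a₂ *
               ENNReal.ofReal (κ ^ r) ^ (ρ - a₂) * Np ^ (p₁.toReal * (a₁ - a₂)))) ^ p₂.toReal := ENNReal.rpow_le_rpow step1 hP₂nn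
          _ = Cst * (∫⁻ σ in Set.Ioc 0 t, K (t - σ) ^ r * N σ ^ p₁.toReal) := by
              rw [ENNReal.mul_rpow_of_nonneg _ _ hP₂nn,
                ENNReal.mul_rpow_of_nonneg _ _ hP₂nn,
                ENNReal.mul_rpow_of_nonneg _ _ hP₂nn,
                ← ENNReal.rpow_mul (∫⁻ σ in Set.Ioc 0 t, K (t - σ) ^ r * N σ ^ p₁.toReal),
                ha₂P, ENNReal.rpow_one, ← ENNReal.rpow_mul (ENNReal.ofReal (κ ^ r)),
                ← ENNReal.rpow_mul Np, hCstdef]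
              ring
      have int_le : (∫⁻ t in Set.Ioc 0 T, F t ^ p₂.toReal) ≤
          Cst * (ENNReal.ofReal (κ ^ r) * Np ^ p₁.toReal) := by
        calc (∫⁻ t in Set.Ioc 0 T, F t ^ p₂.toReal)
            ≤ ∫⁻ t in Set.Ioc 0 T,
                Cst * (∫⁻ σ in Set.Ioc 0 t, K (t - σ) ^ r * N σ ^ p₁.toReal) := by
              apply lintegral_mono_ae
              rw [ae_restrict_iff' measurableSet_Ioc]
              exact Filter.Eventually.of_forall key
          _ = Cst * ∫⁻ t in Set.Ioc 0 T,
                (∫⁻ σ in Set.Ioc 0 t, K (t - σ) ^ r * N σ ^ p₁.toReal) :=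
              lintegral_const_mul' _ _ hCsttop
          _ ≤ Cst * (ENNReal.ofReal (κ ^ r) * ∫⁻ σ in Set.Ioc 0 T, N σ ^ p₁.toReal) := by
              apply mul_le_mul_right
              exact tonelli_step T (fun u => K u ^ r) (fun σ => N σ ^ p₁.toReal)
                (hKmeas.pow_const r) (hN.pow_const p₁.toReal)
                (ENNReal.ofReal (κ ^ r)) ENNReal.ofReal_ne_top (kint hρz)
          _ = Cst * (ENNReal.ofReal (κ ^ r) * Np ^ p₁.toReal) := by rw [hNp]
      have collect : Cst * (ENNReal.ofReal (κ ^ r) * Np ^ p₁.toReal) =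
          (ENNReal.ofReal (Ctot * κ) * Np) ^ p₂.toReal := by
        have e1 : (ρ - a₂) * p₂.toReal + 1 = ρ * p₂.toReal := by rw [sub_mul, ha₂P]; ring
        have e2 : p₁.toReal * (a₁ - a₂) * p₂.toReal + p₁.toReal = p₂.toReal := by
          linear_combination p₂.toReal * ha₁P - p₁.toReal * ha₂P
        calc Cst * (ENNReal.ofReal (κ ^ r) * Np ^ p₁.toReal)
            = ENNReal.ofReal Ctot ^ p₂.toReal *
              (ENNReal.ofReal (κ ^ r) ^ ((ρ - a₂) * p₂.toReal) *
                ENNReal.ofReal (κ ^ r) ^ (1:ℝ)) *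
              (Np ^ (p₁.toReal * (a₁ - a₂) * p₂.toReal) * Np ^ p₁.toReal) := by
              rw [hCstdef, ENNReal.rpow_one]; ring
          _ = ENNReal.ofReal Ctot ^ p₂.toReal *
              ENNReal.ofReal (κ ^ r) ^ (ρ * p₂.toReal) * Np ^ p₂.toReal := by
              rw [← ENNReal.rpow_add_of_nonneg _ _ (by positivity) zero_le_one,
                ← ENNReal.rpow_add_of_nonneg _ _ (by positivity) (by linarith), e1, e2]
          _ = ENNReal.ofReal Ctot ^ p₂.toReal *
              ENNReal.ofReal κ ^ p₂.toReal * Np ^ p₂.toReal := by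
              rw [ENNReal.ofReal_rpow_of_nonneg (x := κ ^ r) (by positivity) (by positivity),
                ← Real.rpow_mul hκ.le, ← mul_assoc r ρ, hrρ, one_mul,
                ← ENNReal.ofReal_rpow_of_nonneg hκ.le hP₂nn]
          _ = (ENNReal.ofReal (Ctot * κ) * Np) ^ p₂.toReal := by
              rw [ENNReal.mul_rpow_of_nonneg _ _ hP₂nn, ENNReal.ofReal_mul hCtot.le,
                ENNReal.mul_rpow_of_nonneg _ _ hP₂nn]
      rw [timeLp, if_neg hp₂top]
      calc (∫⁻ t in Set.Ioc 0 T, F t ^ p₂.toReal) ^ (1 / p₂.toReal)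
          ≤ ((ENNReal.ofReal (Ctot * κ) * Np) ^ p₂.toReal) ^ (1 / p₂.toReal) :=
            ENNReal.rpow_le_rpow (int_le.trans_eq collect) (by positivity)
        _ = ENNReal.ofReal (Ctot * κ) * Np := by
            rw [← ENNReal.rpow_mul, mul_one_div, div_self hP₂0, ENNReal.rpow_one]
lemma coef_bound (Creal c s ρ x : ℝ) (hC : 0 < Creal) (hc : 0 < c)
    (hρ0 : 0 ≤ ρ) (hρ1 : ρ ≤ 1) (hx : 0 ≤ x) :
    (2:ℝ) ^ (x * (s - 1 + 2*ρ)) * (Creal * 2 ^ x * (ρ / (c * 4 ^ x)) ^ ρ) ≤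
      (Creal * (1 + c⁻¹)) * 2 ^ (x * s) := by
  have h2pos : (0:ℝ) < 2 := two_pos
  have h2nn : (0:ℝ) ≤ 2 := by norm_num
  have h4x : (4:ℝ) ^ x = 2 ^ (2*x) := by
    have h2 : ((2:ℝ) ^ (2:ℝ)) = 4 := by
      rw [show (2:ℝ) = ((2:ℕ):ℝ) from by norm_num, Real.rpow_natCast]
      norm_num
    rw [← h2, ← Real.rpow_mul h2nn]
  have hsplit : (ρ / (c * 4 ^ x)) ^ ρ = ρ^ρ * ((c ^ ρ)⁻¹ * (((2:ℝ) ^ (2*x)) ^ ρ)⁻¹) := by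
    rw [h4x, Real.div_rpow hρ0 (by positivity), Real.mul_rpow hc.le (by positivity),
      div_eq_mul_inv, mul_inv]
  have hρρ : ρ ^ ρ ≤ 1 := Real.rpow_le_one hρ0 hρ1 hρ0
  have hcinv : (c ^ ρ)⁻¹ ≤ 1 + c⁻¹ := by
    rcases le_or_gt 1 c with h | h
    · have h1 : (1:ℝ) ≤ c ^ ρ := by
        have := Real.rpow_le_rpow_of_exponent_le h hρ0
        rwa [Real.rpow_zero] at this
      have h2 : (c ^ ρ)⁻¹ ≤ 1 := inv_le_one_of_one_le₀ h1
      have h3 : (0:ℝ) < c⁻¹ := by positivity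
      linarith
    · have h1 : c ^ (1:ℝ) ≤ c ^ ρ := Real.rpow_le_rpow_of_exponent_ge hc h.le hρ1
      rw [Real.rpow_one] at h1
      have h2' : (c^ρ)⁻¹ ≤ c⁻¹ := inv_anti₀ hc h1
      linarith
  calc (2:ℝ) ^ (x * (s - 1 + 2*ρ)) * (Creal * 2 ^ x * (ρ / (c * 4 ^ x)) ^ ρ)
      ≤ (2:ℝ) ^ (x * (s - 1 + 2*ρ)) *
          (Creal * 2 ^ x * ((1 + c⁻¹) * (((2:ℝ) ^ (2*x)) ^ ρ)⁻¹)) := by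
        apply mul_le_mul_of_nonneg_left _ (by positivity)
        apply mul_le_mul_of_nonneg_left _ (by positivity)
        rw [hsplit]
        calc ρ^ρ * ((c ^ ρ)⁻¹ * (((2:ℝ) ^ (2*x)) ^ ρ)⁻¹)
            ≤ 1 * ((1 + c⁻¹) * (((2:ℝ) ^ (2*x)) ^ ρ)⁻¹) := by
              apply mul_le_mul hρρ _ (by positivity) zero_le_one
              exact mul_le_mul_of_nonneg_right hcinv (by positivity)
          _ = (1 + c⁻¹) * (((2:ℝ) ^ (2*x)) ^ ρ)⁻¹ := one_mul _
    _ = (Creal * (1 + c⁻¹)) *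
          ((2:ℝ) ^ (x * (s - 1 + 2*ρ)) * 2 ^ x * (((2:ℝ) ^ (2*x)) ^ ρ)⁻¹) := by ring
    _ = (Creal * (1 + c⁻¹)) * 2 ^ (x * s) := by
        congr 1
        rw [← Real.rpow_mul h2nn, ← Real.rpow_neg h2nn, ← Real.rpow_add h2pos,
          ← Real.rpow_add h2pos]
        congr 1
        ring

lemma coef0_bound (Creal c s ρ T : ℝ) (hC : 0 < Creal) (hc : 0 < c)
    (hρ0 : 0 ≤ ρ) (hT : 0 < T) :
    (2:ℝ) ^ ((-1) * (s - 1 + 2*ρ)) * (Creal * (1 + T)) ≤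
      ((4 * Creal * (1 + c⁻¹)) * (1 + T)) * 2 ^ ((-1)*s) := by
  have h2pos : (0:ℝ) < 2 := two_pos
  have key : (2:ℝ) ^ ((-1) * (s - 1 + 2*ρ)) ≤ (4 * (1+c⁻¹)) * 2 ^ ((-1)*s) := by
    have h1 : (2:ℝ) ^ ((-1)*(s-1+2*ρ)) = 2^(1 - 2*ρ) * 2^((-1)*s) := by
      rw [← Real.rpow_add h2pos]; congr 1; ring
    have h2 : (2:ℝ) ^ (1 - 2*ρ) ≤ 2 ^ (1:ℝ) :=
      Real.rpow_le_rpow_of_exponent_le one_le_two (by linarith)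
    rw [Real.rpow_one] at h2
    have h3 : (2:ℝ) ≤ 4 * (1 + c⁻¹) := by
      have : (0:ℝ) < c⁻¹ := by positivity
      nlinarith
    rw [h1]
    exact mul_le_mul_of_nonneg_right (h2.trans h3) (by positivity)
  calc (2:ℝ) ^ ((-1) * (s - 1 + 2*ρ)) * (Creal * (1 + T))
      ≤ ((4 * (1+c⁻¹)) * 2 ^ ((-1)*s)) * (Creal * (1 + T)) :=
        mul_le_mul_of_nonneg_right key (by positivity)
    _ = ((4 * Creal * (1 + c⁻¹)) * (1 + T)) * 2 ^ ((-1)*s) := by ring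
/-- Smoothing effect of the Oseen operator `L_Oss f t = -∫₀ᵗ e^{(t-s)Δ} ℙ∇ f(s) ds` in
Chemin–Lerner spaces. The Littlewood–Paley blocks (indexed by `j : ℕ`, `j` standing for the
dyadic index `j - 1`) of `f` and of `g = L_Oss f` are given through their `L^q` norms; the
hypotheses encode the Duhamel dyadic block estimate
`‖Δ_j (L_Oss f)(t)‖_{L^q} ≤ C ∫₀ᵗ 2^j e^{-c(t-s)4^j} ‖Δ_j f(s)‖_{L^q} ds` for `j ≥ 0` and the
low-frequency estimate `‖Δ_{-1} (L_Oss f)(t)‖_{L^q} ≤ C ∫₀ᵗ ‖Δ_{-1} f(s)‖_{L^q} ds`. The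
conclusion is the bound `‖L_Oss f‖_{𝐋̃^{p₂}_T B^{s',∞}_q} ≤ C'(1+T) ‖f‖_{𝐋̃^{p₁}_T B^{s,∞}_q}`
with `s' = s + 1 - 2(1/p₁ - 1/p₂)` and `C'` independent of `T`. -/
theorem stmt_19 (d : ℕ) (hd : 0 < d) (p₁ p₂ q : ℝ≥0∞)
    (hp₁ : 1 ≤ p₁) (hp₁₂ : p₁ ≤ p₂) (hq : 1 ≤ q) (s : ℝ) (C c : ℝ) (hC : 0 < C) (hc : 0 < c) :
    ∃ C' : ℝ, 0 < C' ∧ ∀ T : ℝ, 0 < T →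
      ∀ Δf ΔLf : ℕ → ℝ → EuclideanSpace ℝ (Fin d) → ℂ,
      (∀ j : ℕ, Measurable fun t => eLpNorm (Δf j t) q volume) →
      (∀ j : ℕ, Measurable fun t => eLpNorm (ΔLf j t) q volume) →
      (∀ j : ℕ, 1 ≤ j → ∀ t ∈ Set.Ioc (0 : ℝ) T,
        eLpNorm (ΔLf j t) q volume ≤
          ENNReal.ofReal C * ∫⁻ σ in Set.Ioc 0 t,
            ENNReal.ofReal
              ((2 : ℝ) ^ ((j : ℝ) - 1) * Real.exp (-c * (t - σ) * 4 ^ ((j : ℝ) - 1))) *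
              eLpNorm (Δf j σ) q volume) →
      (∀ t ∈ Set.Ioc (0 : ℝ) T,
        eLpNorm (ΔLf 0 t) q volume ≤
          ENNReal.ofReal C * ∫⁻ σ in Set.Ioc 0 t, eLpNorm (Δf 0 σ) q volume) →
      (⨆ j : ℕ,
          ENNReal.ofReal
              ((2 : ℝ) ^ (((j : ℝ) - 1) * (s + 1 - 2 * (1 / p₁.toReal - 1 / p₂.toReal)))) *
            timeLp p₂ T (fun t => eLpNorm (ΔLf j t) q volume)) ≤
        ENNReal.ofReal (C' * (1 + T)) *
          ⨆ j : ℕ, ENNReal.ofReal ((2 : ℝ) ^ (((j : ℝ) - 1) * s)) *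
            timeLp p₁ T (fun t => eLpNorm (Δf j t) q volume) := by
  classical
  have hp₂ : 1 ≤ p₂ := le_trans hp₁ hp₁₂
  set a₁ := 1 / p₁.toReal with ha₁def
  set a₂ := 1 / p₂.toReal with ha₂def
  set ρ := 1 - a₁ + a₂ with hρdef
  have ha₁0 : 0 ≤ a₁ := by positivity
  have ha₂0 : 0 ≤ a₂ := by positivity
  have ha₁1 : a₁ ≤ 1 := by
    by_cases h : p₁ = ⊤
    · simp [ha₁def, h]
    · have h1 : 1 ≤ p₁.toReal := by simpa using ENNReal.toReal_mono h hp₁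
      rw [ha₁def, div_le_one (by linarith)]
      exact h1
  have ha₂a₁ : a₂ ≤ a₁ := by
    by_cases h : p₂ = ⊤
    · simp [ha₂def, h, ha₁0]
    · have hp₁t : p₁ ≠ ⊤ := fun hh => h (top_le_iff.mp (hh ▸ hp₁₂))
      have h1 : 1 ≤ p₁.toReal := by simpa using ENNReal.toReal_mono hp₁t hp₁
      have h2 : p₁.toReal ≤ p₂.toReal := ENNReal.toReal_mono h hp₁₂
      rw [ha₁def, ha₂def]
      exact one_div_le_one_div_of_le (by linarith) h2
  have hρ0 : 0 ≤ ρ := by rw [hρdef]; linarith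
  have hρ1 : ρ ≤ 1 := by rw [hρdef]; linarith
  have hs' : ∀ x : ℝ, x * (s + 1 - 2 * (a₁ - a₂)) = x * (s - 1 + 2*ρ) := by
    intro x; rw [hρdef]; ring
  refine ⟨4 * C * (1 + c⁻¹), by positivity, ?_⟩
  intro T hT Δf ΔLf hmf hmLf hjhyp h0hyp
  set S := ⨆ j : ℕ, ENNReal.ofReal ((2 : ℝ) ^ (((j : ℝ) - 1) * s)) *
      timeLp p₁ T (fun t => eLpNorm (Δf j t) q volume) with hSdef
  apply iSup_le
  intro j
  -- a per-index bound coming from the master lemma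
  have main : ∀ Ctot κ : ℝ, 0 < Ctot → 0 < κ →
      timeLp p₂ T (fun t => eLpNorm (ΔLf j t) q volume) ≤
        ENNReal.ofReal (Ctot * κ) *
          timeLp p₁ T (fun t => eLpNorm (Δf j t) q volume) →
      (2:ℝ) ^ (((j:ℝ) - 1) * (s - 1 + 2*ρ)) * (Ctot * κ) ≤
        (4 * C * (1 + c⁻¹) * (1 + T)) * 2 ^ (((j:ℝ) - 1) * s) →
      ENNReal.ofReal ((2 : ℝ) ^ (((j : ℝ) - 1) * (s + 1 - 2 * (a₁ - a₂)))) *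
          timeLp p₂ T (fun t => eLpNorm (ΔLf j t) q volume) ≤
        ENNReal.ofReal (4 * C * (1 + c⁻¹) * (1 + T)) * S := by
    intro Ctot κ hCtot hκ hmaster hcoef
    calc ENNReal.ofReal ((2 : ℝ) ^ (((j : ℝ) - 1) * (s + 1 - 2 * (a₁ - a₂)))) *
          timeLp p₂ T (fun t => eLpNorm (ΔLf j t) q volume)
        ≤ ENNReal.ofReal ((2 : ℝ) ^ (((j : ℝ) - 1) * (s + 1 - 2 * (a₁ - a₂)))) *
            (ENNReal.ofReal (Ctot * κ) *
              timeLp p₁ T (fun t => eLpNorm (Δf j t) q volume)) :=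
          mul_le_mul_right hmaster _
      _ = ENNReal.ofReal ((2 : ℝ) ^ (((j : ℝ) - 1) * (s + 1 - 2 * (a₁ - a₂))) * (Ctot * κ)) *
            timeLp p₁ T (fun t => eLpNorm (Δf j t) q volume) := by
          rw [← mul_assoc, ← ENNReal.ofReal_mul (by positivity)]
      _ ≤ ENNReal.ofReal ((4 * C * (1 + c⁻¹) * (1 + T)) * 2 ^ (((j:ℝ) - 1) * s)) *
            timeLp p₁ T (fun t => eLpNorm (Δf j t) q volume) := by
          apply mul_le_mul_left
          apply ENNReal.ofReal_le_ofReal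
          rw [hs']
          exact hcoef
      _ = ENNReal.ofReal (4 * C * (1 + c⁻¹) * (1 + T)) *
            (ENNReal.ofReal ((2:ℝ) ^ (((j:ℝ) - 1) * s)) *
              timeLp p₁ T (fun t => eLpNorm (Δf j t) q volume)) := by
          rw [ENNReal.ofReal_mul (by positivity), mul_assoc]
      _ ≤ ENNReal.ofReal (4 * C * (1 + c⁻¹) * (1 + T)) * S := by
          apply mul_le_mul_right
          rw [hSdef]
          exact le_iSup (fun j : ℕ => ENNReal.ofReal ((2 : ℝ) ^ (((j : ℝ) - 1) * s)) *
            timeLp p₁ T (fun t => eLpNorm (Δf j t) q volume)) j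
  rcases Nat.eq_zero_or_pos j with hj0 | hjpos
  · -- low frequency block
    subst hj0
    apply main C (1 + T) hC (by linarith)
    · -- master lemma application with B = 0
      apply master p₁ p₂ hp₁ hp₂ hp₁₂ T C 0 (1 + T) hT hC le_rfl (by linarith)
        _ _ (hmf 0)
      · intro t ht
        refine le_trans (h0hyp t ht) (le_of_eq ?_)
        congr 1
        apply lintegral_congr
        intro σ
        rw [show (-(0:ℝ) * (t - σ)) = 0 by ring, Real.exp_zero, ENNReal.ofReal_one, one_mul]
      · intro hρne
        have hρpos : 0 < ρ := lt_of_le_of_ne hρ0 (Ne.symm hρne)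
        have hr1 : 1 ≤ 1/ρ := by rw [le_div_iff₀ hρpos]; linarith
        have hint : (∫⁻ u in Set.Ioc (0:ℝ) T,
            ENNReal.ofReal (Real.exp (-(0:ℝ) * u)) ^ (1/ρ)) = ENNReal.ofReal T := by
          have : ∀ u : ℝ, ENNReal.ofReal (Real.exp (-(0:ℝ) * u)) ^ (1/ρ) = 1 := by
            intro u
            rw [show (-(0:ℝ) * u) = 0 by ring, Real.exp_zero, ENNReal.ofReal_one,
              ENNReal.one_rpow]
          rw [lintegral_congr this, setLIntegral_one, Real.volume_Ioc, sub_zero]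
        rw [hint]
        apply ENNReal.ofReal_le_ofReal
        have h2 : (1 + T) ^ (1:ℝ) ≤ (1 + T) ^ (1/ρ) :=
          Real.rpow_le_rpow_of_exponent_le (by linarith) hr1
        rw [Real.rpow_one] at h2
        linarith
      · intro _
        linarith
    · -- coefficient bound
      have h0 : (((0:ℕ):ℝ) - 1) = -1 := by norm_num
      rw [h0]
      exact coef0_bound C c s ρ T hC hc hρ0 hT
  · -- high frequency blocks
    set x := (j:ℝ) - 1 with hxdef
    have hx : (0:ℝ) ≤ x := by
      rw [hxdef]
      have : (1:ℝ) ≤ (j:ℝ) := by exact_mod_cast hjpos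
      linarith
    have hB : (0:ℝ) < c * 4 ^ x := by positivity
    set κ : ℝ := (ρ / (c * 4 ^ x)) ^ ρ with hκdef
    have hκpos : 0 < κ := by
      rcases eq_or_lt_of_le hρ0 with h | h
      · rw [hκdef, ← h, Real.rpow_zero]; norm_num
      · rw [hκdef]; positivity
    apply main (C * 2 ^ x) κ (by positivity) hκpos
    · -- master lemma application
      apply master p₁ p₂ hp₁ hp₂ hp₁₂ T (C * 2 ^ x) (c * 4 ^ x) κ hT (by positivity)
        (by positivity) hκpos _ _ (hmf j)
      · intro t ht
        refine le_trans (hjhyp j hjpos t ht) ?_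
        rw [ENNReal.ofReal_mul hC.le, mul_assoc]
        apply mul_le_mul_right
        rw [← lintegral_const_mul' _ _ ENNReal.ofReal_ne_top]
        apply le_of_eq
        apply lintegral_congr
        intro σ
        rw [← mul_assoc, ← ENNReal.ofReal_mul (by positivity)]
        congr 2
        rw [hxdef]
        ring_nf
      · intro hρne
        have hρpos : 0 < ρ := lt_of_le_of_ne hρ0 (Ne.symm hρne)
        have hrpos : 0 < 1/ρ := by positivity
        have hκr : κ ^ (1/ρ) = ρ / (c * 4 ^ x) := by
          rw [hκdef, ← Real.rpow_mul (by positivity), mul_one_div, div_self hρpos.ne',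
            Real.rpow_one]
        have hint : ∀ u : ℝ, ENNReal.ofReal (Real.exp (-(c * 4 ^ x) * u)) ^ (1/ρ) =
            ENNReal.ofReal (Real.exp (-(c * 4 ^ x * (1/ρ)) * u)) := by
          intro u
          rw [ENNReal.ofReal_rpow_of_nonneg (Real.exp_pos _).le hrpos.le, ← Real.exp_mul]
          congr 1
          ring
        rw [lintegral_congr hint, hκr]
        refine le_trans (lint_exp_le (c * 4 ^ x * (1/ρ)) T (by positivity)) ?_
        apply ENNReal.ofReal_le_ofReal
        apply le_of_eq
        have hρne' : ρ ≠ 0 := hρpos.ne'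
        have hBne : c * 4 ^ x ≠ 0 := hB.ne'
        field_simp
      · intro hρz
        have hρz' : ρ = 0 := by rw [hρdef, ha₁def, ha₂def]; exact hρz
        rw [hκdef, hρz', Real.rpow_zero]
    · -- coefficient bound
      have hcb := coef_bound C c s ρ x hC hc hρ0 hρ1 hx
      have h1T : (1:ℝ) ≤ 1 + T := by linarith
      calc (2:ℝ) ^ (x * (s - 1 + 2*ρ)) * (C * 2 ^ x * κ)
          ≤ (C * (1 + c⁻¹)) * 2 ^ (x * s) := by rw [hκdef]; exact hcb
        _ ≤ (4 * C * (1 + c⁻¹) * (1 + T)) * 2 ^ (x * s) := by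
            apply mul_le_mul_of_nonneg_right _ (by positivity)
            nlinarith [mul_pos (mul_pos hC (show (0:ℝ) < 1 + c⁻¹ by positivity)) hT,
              mul_pos hC (show (0:ℝ) < 1 + c⁻¹ by positivity)]
end
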